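/- arXiv:1808.00146 — 3 statements merged into one kernel-verified Lean document; each statement's English description precedes it below -/
import Mathlib

section
/- Let h, k be positive irrational real numbers with h + k = n a positive integer. Let P ⊂ ℝ² be the triangle with vertices (0,0), (-h,1), (k,1) (the pyramid over the segment [-h,k]×{1} with apex the origin). Then for every positive integer t, #(tP ∩ ℤ²) = (n/2)t² + (n/2)t + 1. -/
open Pointwise

/-- The integer lattice ℤ² inside ℝ². -/
def latticeZ2 : Set (ℝ × ℝ) := {p | ∃ m n : ℤ, p = ((m : ℝ), (n : ℝ))}

/-- Sum of two floors when the sum is an integer and one summand is irrational. -/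
lemma floor_pair (a b : ℝ) (ha : Irrational a) (m : ℤ) (hab : a + b = m) :
    ⌊a⌋ + ⌊b⌋ = m - 1 := by
  have hb : Irrational b := by
    have hb' : b = (m : ℝ) - a := by linarith
    rw [hb']; exact ha.intCast_sub m
  have fa1 : 0 < Int.fract a := Int.fract_pos.mpr (ha.ne_int ⌊a⌋)
  have fb1 : 0 < Int.fract b := Int.fract_pos.mpr (hb.ne_int ⌊b⌋)
  have fa2 : Int.fract a < 1 := Int.fract_lt_one a
  have fb2 : Int.fract b < 1 := Int.fract_lt_one b
  have hfa : Int.fract a = a - ⌊a⌋ := rfl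
  have hfb : Int.fract b = b - ⌊b⌋ := rfl
  have h1 : (0 : ℝ) < ((m - ⌊a⌋ - ⌊b⌋ : ℤ) : ℝ) := by push_cast; linarith
  have h2 : ((m - ⌊a⌋ - ⌊b⌋ : ℤ) : ℝ) < 2 := by push_cast; linarith
  have h1' : 0 < m - ⌊a⌋ - ⌊b⌋ := by exact_mod_cast h1
  have h2' : m - ⌊a⌋ - ⌊b⌋ < 2 := by exact_mod_cast h2
  omega

/-- Gauss sum, real version. -/
lemma gauss_sum_real (t : ℕ) :
    ∑ i ∈ Finset.range t, ((i : ℝ) + 1) = ((t : ℝ) ^ 2 + t) / 2 := by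
  induction t with
  | zero => simp
  | succ m ih => rw [Finset.sum_range_succ, ih]; push_cast; ring

/-- Characterization of the triangle with vertices (0,0), (-h,1), (k,1). -/
lemma tri_mem (h k : ℝ) (hhpos : 0 < h) (hkpos : 0 < k) (p : ℝ × ℝ) :
    p ∈ convexHull ℝ {((0 : ℝ), (0 : ℝ)), (-h, 1), (k, 1)} ↔
      0 ≤ p.2 ∧ p.2 ≤ 1 ∧ -(h * p.2) ≤ p.1 ∧ p.1 ≤ k * p.2 := by
  constructor
  · intro hp
    have hQ : Convex ℝ {q : ℝ × ℝ | 0 ≤ q.2 ∧ q.2 ≤ 1 ∧ -(h * q.2) ≤ q.1 ∧ q.1 ≤ k * q.2} := by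
      rintro x ⟨hx1, hx2, hx3, hx4⟩ y ⟨hy1, hy2, hy3, hy4⟩ a b ha hb hab
      simp only [Set.mem_setOf_eq, Prod.snd_add, Prod.fst_add, Prod.smul_snd, Prod.smul_fst,
        smul_eq_mul]
      refine ⟨by nlinarith, by nlinarith, by nlinarith, by nlinarith⟩
    have hsub : ({((0 : ℝ), (0 : ℝ)), (-h, 1), (k, 1)} : Set (ℝ × ℝ)) ⊆
        {q : ℝ × ℝ | 0 ≤ q.2 ∧ q.2 ≤ 1 ∧ -(h * q.2) ≤ q.1 ∧ q.1 ≤ k * q.2} := by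
      rintro q hq
      simp only [Set.mem_insert_iff, Set.mem_singleton_iff] at hq
      rcases hq with rfl | rfl | rfl
      · exact ⟨le_refl _, by norm_num, by norm_num, by norm_num⟩
      · exact ⟨by norm_num, le_refl _, by norm_num, by norm_num; linarith⟩
      · exact ⟨by norm_num, le_refl _, by norm_num; linarith, by norm_num⟩
    exact convexHull_min hsub hQ hp
  · rintro ⟨h0, h1, h2, h3⟩
    rw [show ({((0 : ℝ), (0 : ℝ)), (-h, 1), (k, 1)} : Set (ℝ × ℝ)) =
        insert ((0 : ℝ), (0 : ℝ)) {(-h, 1), (k, 1)} from rfl,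
      convexHull_insert ⟨_, Set.mem_insert _ _⟩, mem_convexJoin]
    by_cases hy : p.2 = 0
    · have hx : p.1 = 0 := by
        rw [hy] at h2 h3
        simp at h2 h3
        linarith
      refine ⟨(0, 0), rfl, (-h, 1), subset_convexHull ℝ _ (Set.mem_insert _ _), ?_⟩
      have : p = ((0 : ℝ), (0 : ℝ)) := Prod.ext hx hy
      rw [this]; exact left_mem_segment ℝ _ _
    · have hy' : 0 < p.2 := lt_of_le_of_ne h0 (Ne.symm hy)
      have hhk : 0 < h + k := by linarith
      refine ⟨(0, 0), rfl, (p.1 / p.2, 1), ?_, ?_⟩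
      · rw [convexHull_pair]
        have hs1 : p.1 / p.2 ≤ k := (div_le_iff₀ hy').mpr (by linarith [h3])
        have hs2 : -h ≤ p.1 / p.2 := by
          rw [le_div_iff₀ hy']; nlinarith
        refine ⟨(k - p.1 / p.2) / (h + k), (p.1 / p.2 + h) / (h + k),
          div_nonneg (by linarith) hhk.le, div_nonneg (by linarith) hhk.le,
          by field_simp; ring, ?_⟩
        apply Prod.ext
        · simp only [Prod.smul_fst, Prod.fst_add, smul_eq_mul]
          field_simp
          ring
        · simp only [Prod.smul_snd, Prod.snd_add, smul_eq_mul]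
          field_simp
          ring
      · refine ⟨1 - p.2, p.2, by linarith, h0, by ring, ?_⟩
        apply Prod.ext
        · simp only [Prod.smul_fst, Prod.fst_add, smul_eq_mul]
          field_simp
          ring
        · simp only [Prod.smul_snd, Prod.snd_add, smul_eq_mul]
          ring

theorem stmt_3 (h k : ℝ) (hh : Irrational h) (hk : Irrational k)
    (hhpos : 0 < h) (hkpos : 0 < k) (n : ℕ) (hn : 0 < n) (hsum : h + k = (n : ℝ))
    (P : Set (ℝ × ℝ))
    (hP : P = convexHull ℝ {((0 : ℝ), (0 : ℝ)), (-h, 1), (k, 1)})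
    (t : ℕ) (ht : 0 < t) :
    ((((t : ℝ) • P) ∩ latticeZ2).ncard : ℝ) =
      ((n : ℝ) / 2) * t ^ 2 + ((n : ℝ) / 2) * t + 1 := by
  have ht0 : (0 : ℝ) < (t : ℝ) := by exact_mod_cast ht
  have ht0' : (t : ℝ) ≠ 0 := ne_of_gt ht0
  -- membership in the dilated triangle
  have hmem : ∀ p : ℝ × ℝ, p ∈ (t : ℝ) • P ↔
      0 ≤ p.2 ∧ p.2 ≤ t ∧ -(h * p.2) ≤ p.1 ∧ p.1 ≤ k * p.2 := by
    intro p
    constructor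
    · rintro ⟨q, hq, rfl⟩
      rw [hP, tri_mem h k hhpos hkpos] at hq
      obtain ⟨q1, q2, q3, q4⟩ := hq
      simp only [Prod.smul_fst, Prod.smul_snd, smul_eq_mul]
      refine ⟨by positivity, by nlinarith, by nlinarith, by nlinarith⟩
    · rintro ⟨c0, c1, c2, c3⟩
      refine ⟨(p.1 / t, p.2 / t), ?_, ?_⟩
      · rw [hP, tri_mem h k hhpos hkpos]
        refine ⟨by positivity, (div_le_one ht0).mpr c1, ?_, ?_⟩
        · have e1 : -(h * (p.2 / (t : ℝ))) = (-(h * p.2)) / t := by ring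
          rw [e1]; exact (div_le_div_iff_of_pos_right ht0).mpr c2
        · have e1 : k * (p.2 / (t : ℝ)) = (k * p.2) / t := by ring
          rw [e1]; exact (div_le_div_iff_of_pos_right ht0).mpr c3
      · apply Prod.ext
        · simp only [Prod.smul_fst, smul_eq_mul]; exact mul_div_cancel₀ _ ht0'
        · simp only [Prod.smul_snd, smul_eq_mul]; exact mul_div_cancel₀ _ ht0'
  -- the finite set of lattice points
  classical
  set S : Finset (ℤ × ℤ) := (Finset.range (t + 1)).biUnion
    (fun j => (Finset.Icc (-⌊h * (j : ℝ)⌋) ⌊k * (j : ℝ)⌋).image (fun i => (i, (j : ℤ)))) with hS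
  have hset : (((t : ℝ) • P) ∩ latticeZ2) =
      ↑(S.image (fun q : ℤ × ℤ => ((q.1 : ℝ), (q.2 : ℝ)))) := by
    ext p
    simp only [Set.mem_inter_iff, latticeZ2, Set.mem_setOf_eq, Finset.coe_image,
      Set.mem_image, Finset.mem_coe, hS, Finset.mem_biUnion, Finset.mem_range,
      Finset.mem_image, Finset.mem_Icc]
    constructor
    · rintro ⟨hpP, m, l, rfl⟩
      rw [hmem] at hpP
      obtain ⟨c0, c1, c2, c3⟩ := hpP
      simp only at c0 c1 c2 c3
      have hl0 : 0 ≤ l := by exact_mod_cast c0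
      have hlt : l ≤ (t : ℤ) := by exact_mod_cast c1
      refine ⟨(m, l), ⟨l.toNat, ?_, m, ⟨?_, ?_⟩, ?_⟩, ?_⟩
      · omega
      · have hcast : ((l.toNat : ℕ) : ℝ) = (l : ℝ) := by
          exact_mod_cast Int.toNat_of_nonneg hl0
        rw [hcast]
        have : ⌈-(h * (l : ℝ))⌉ ≤ m := Int.ceil_le.mpr (by exact_mod_cast c2)
        rwa [Int.ceil_neg] at this
      · have hcast : ((l.toNat : ℕ) : ℝ) = (l : ℝ) := by
          exact_mod_cast Int.toNat_of_nonneg hl0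
        rw [hcast]
        exact Int.le_floor.mpr (by exact_mod_cast c3)
      · rw [Int.toNat_of_nonneg hl0]
      · rfl
    · rintro ⟨q, ⟨j, hj, i, ⟨hi1, hi2⟩, rfl⟩, rfl⟩
      refine ⟨?_, i, (j : ℤ), rfl⟩
      rw [hmem]
      have hjt : ((j : ℤ) : ℝ) ≤ (t : ℝ) := by
        push_cast; exact_mod_cast Nat.lt_succ_iff.mp hj
      refine ⟨by positivity, hjt, ?_, ?_⟩
      · have hc : ⌈-(h * ((j : ℕ) : ℝ))⌉ ≤ i := by
          rw [Int.ceil_neg]; exact_mod_cast hi1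
        have := Int.ceil_le.mp hc
        push_cast at this ⊢
        exact this
      · have := Int.le_floor.mp hi2
        push_cast at this ⊢
        exact this
  rw [hset, Set.ncard_coe_finset]
  have hinj : Function.Injective (fun q : ℤ × ℤ => ((q.1 : ℝ), (q.2 : ℝ))) := by
    rintro ⟨a1, a2⟩ ⟨b1, b2⟩ hab
    simp only [Prod.mk.injEq] at hab ⊢
    exact ⟨by exact_mod_cast hab.1, by exact_mod_cast hab.2⟩
  rw [Finset.card_image_of_injective _ hinj]
  have hdisj : ∀ x ∈ Finset.range (t + 1), ∀ y ∈ Finset.range (t + 1), x ≠ y →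
      Disjoint ((Finset.Icc (-⌊h * (x : ℝ)⌋) ⌊k * (x : ℝ)⌋).image (fun i => (i, (x : ℤ))))
        ((Finset.Icc (-⌊h * (y : ℝ)⌋) ⌊k * (y : ℝ)⌋).image (fun i => (i, (y : ℤ)))) := by
    intro x _ y _ hxy
    rw [Finset.disjoint_left]
    rintro ⟨a, b⟩ ha hb
    simp only [Finset.mem_image, Finset.mem_Icc, Prod.mk.injEq] at ha hb
    obtain ⟨i1, -, -, e1⟩ := ha
    obtain ⟨i2, -, -, e2⟩ := hb
    exact hxy (by exact_mod_cast e1.trans e2.symm)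
  rw [hS, Finset.card_biUnion hdisj]
  have hrowinj : ∀ j : ℕ, Function.Injective (fun i : ℤ => (i, (j : ℤ))) := by
    intro j a b hab
    exact ((Prod.mk.injEq _ _ _ _).mp hab).1
  have hrow : ∀ j : ℕ, ((Finset.Icc (-⌊h * (j : ℝ)⌋) ⌊k * (j : ℝ)⌋).image
      (fun i => (i, (j : ℤ)))).card = (⌊k * (j : ℝ)⌋ + 1 + ⌊h * (j : ℝ)⌋).toNat := by
    intro j
    rw [Finset.card_image_of_injective _ (hrowinj j), Int.card_Icc]
    congr 1
    ring
  have hkey : ∀ j : ℕ, ⌊k * ((j + 1 : ℕ) : ℝ)⌋ + 1 + ⌊h * ((j + 1 : ℕ) : ℝ)⌋ =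
      (n : ℤ) * ((j : ℤ) + 1) := by
    intro j
    have hja : Irrational (h * ((j + 1 : ℕ) : ℝ)) := by
      rw [mul_comm]; exact hh.natCast_mul (Nat.succ_ne_zero j)
    have hfp := floor_pair (h * ((j + 1 : ℕ) : ℝ)) (k * ((j + 1 : ℕ) : ℝ)) hja
      ((n : ℤ) * ((j : ℤ) + 1)) (by push_cast; linear_combination ((j : ℝ) + 1) * hsum)
    omega
  have hcast : ((∑ j ∈ Finset.range (t + 1), ((Finset.Icc (-⌊h * (j : ℝ)⌋) ⌊k * (j : ℝ)⌋).image
      (fun i => (i, (j : ℤ)))).card : ℕ) : ℝ) =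
      ∑ j ∈ Finset.range (t + 1), (((Finset.Icc (-⌊h * (j : ℝ)⌋) ⌊k * (j : ℝ)⌋).image
      (fun i => (i, (j : ℤ)))).card : ℝ) := Nat.cast_sum _ _
  rw [hcast, Finset.sum_range_succ' (fun j => (((Finset.Icc (-⌊h * (j : ℝ)⌋) ⌊k * (j : ℝ)⌋).image
      (fun i => (i, (j : ℤ)))).card : ℝ))]
  have hzero : (((Finset.Icc (-⌊h * ((0 : ℕ) : ℝ)⌋) ⌊k * ((0 : ℕ) : ℝ)⌋).image
      (fun i => (i, ((0 : ℕ) : ℤ)))).card : ℝ) = 1 := by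
    rw [hrow 0]
    norm_num
  rw [hzero]
  have hterm : ∀ i ∈ Finset.range t, (((Finset.Icc (-⌊h * ((i + 1 : ℕ) : ℝ)⌋)
      ⌊k * ((i + 1 : ℕ) : ℝ)⌋).image (fun i' => (i', ((i + 1 : ℕ) : ℤ)))).card : ℝ) =
      (n : ℝ) * ((i : ℝ) + 1) := by
    intro i _
    rw [hrow (i + 1)]
    have h1 : (⌊k * ((i + 1 : ℕ) : ℝ)⌋ + 1 + ⌊h * ((i + 1 : ℕ) : ℝ)⌋).toNat = n * (i + 1) := by
      rw [hkey i]
      have : (n : ℤ) * ((i : ℤ) + 1) = ((n * (i + 1) : ℕ) : ℤ) := by push_cast; ring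
      rw [this, Int.toNat_natCast]
    rw [h1]
    push_cast
    ring
  rw [Finset.sum_congr rfl hterm, ← Finset.mul_sum, gauss_sum_real]
  ring
end

section
/- Let h, k be positive irrational reals with 1/h + 1/k = 1 and h + k = β ∈ ℤ. Let T = conv{(0,0),(h,0),(0,k)} and let P = T ∪ ρ(T) where ρ is the reflection (x,y) ↦ (x,-y). Then for every positive integer t, #(tP ∩ ℤ²) = (h+k)t² + (h+k)t - ⌊ht⌋ + 1. -/
open Pointwise

open Finset
open scoped Classical

lemma card_filter_prod_right (s t : Finset ℤ) (p : ℤ × ℤ → Prop) [DecidablePred p] :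
    #((s ×ˢ t).filter p) = ∑ n ∈ t, #(s.filter fun m => p (m, n)) := by
  rw [Finset.card_filter, Finset.sum_product_right]
  exact Finset.sum_congr rfl fun n _ => (Finset.card_filter _ _).symm

lemma card_filter_prod_left (s t : Finset ℤ) (p : ℤ × ℤ → Prop) [DecidablePred p] :
    #((s ×ˢ t).filter p) = ∑ m ∈ s, #(t.filter fun n => p (m, n)) := by
  rw [Finset.card_filter, Finset.sum_product]
  exact Finset.sum_congr rfl fun n _ => (Finset.card_filter _ _).symm

lemma filter_Icc_le (a b : ℤ) (c : ℝ) :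
    (Finset.Icc a b).filter (fun m : ℤ => (m:ℝ) ≤ c) = Finset.Icc a (min b ⌊c⌋) := by
  ext m
  simp only [Finset.mem_filter, Finset.mem_Icc, ← Int.le_floor]
  omega

lemma filter_Icc_between (a b l : ℤ) (c : ℝ) :
    (Finset.Icc a b).filter (fun m : ℤ => l ≤ m ∧ (m:ℝ) ≤ c) = Finset.Icc (max a l) (min b ⌊c⌋) := by
  ext m
  simp only [Finset.mem_filter, Finset.mem_Icc, ← Int.le_floor]
  omega

lemma ceil_irr {x : ℝ} (hx : Irrational x) : ⌈x⌉ = ⌊x⌋ + 1 := by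
  refine le_antisymm (Int.ceil_le.2 (le_of_lt ?_)) (Int.add_one_le_iff.2 (Int.lt_ceil.2 ?_))
  · push_cast; exact Int.lt_floor_add_one x
  · exact lt_of_le_of_ne (Int.floor_le x) (Ne.symm (hx.ne_int ⌊x⌋))

lemma count_triangle (α : ℝ) (hirr : Irrational α) (hα : 0 < α) (β tz : ℤ)
    (hid : α + α⁻¹ = (β:ℝ) - 2) (htz : 1 ≤ tz) :
    2 * ((#(((Finset.Icc (0:ℤ) (β*tz)) ×ˢ (Finset.Icc (0:ℤ) (β*tz))).filter
        (fun q : ℤ×ℤ => (q.1:ℝ) + (q.2:ℝ)*α ≤ (tz:ℝ)*(α+1)))) : ℤ)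
      = β*tz^2 + β*tz + 2 := by
  have hαinv : (0:ℝ) < α⁻¹ := by positivity
  have hβ2R : (2:ℝ) < (β:ℝ) := by nlinarith
  have hβ2 : (2:ℤ) < β := by exact_mod_cast hβ2R
  set B := β * tz with hB
  have htB : tz ≤ B := by nlinarith
  have htzR : (1:ℝ) ≤ (tz:ℝ) := by exact_mod_cast htz
  have hα1β : α + 1 ≤ (β:ℝ) := by nlinarith
  have hαi1β : α⁻¹ + 1 ≤ (β:ℝ) := by nlinarith
  set C : ℤ × ℤ → Prop := fun q => (q.1:ℝ) + (q.2:ℝ)*α ≤ (tz:ℝ)*(α+1) with hC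
  set S := ((Finset.Icc (0:ℤ) B) ×ˢ (Finset.Icc (0:ℤ) B)).filter C with hS
  -- split into low (n ≤ tz) and high (n > tz)
  have hsplit : #(S.filter (fun q => q.2 ≤ tz)) + #(S.filter (fun q => ¬ q.2 ≤ tz)) = #S :=
    Finset.card_filter_add_card_filter_not _
  -- low part
  have hlow_eq : S.filter (fun q => q.2 ≤ tz)
      = ((Finset.Icc (0:ℤ) B) ×ˢ (Finset.Icc (0:ℤ) tz)).filter C := by
    rw [hS, Finset.filter_filter]
    ext q
    simp only [Finset.mem_filter, Finset.mem_product, Finset.mem_Icc]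
    constructor
    · rintro ⟨⟨⟨hm0, hmB⟩, hn0, hnB⟩, hCq, hnt⟩
      exact ⟨⟨⟨hm0, hmB⟩, hn0, hnt⟩, hCq⟩
    · rintro ⟨⟨⟨hm0, hmB⟩, hn0, hnt⟩, hCq⟩
      exact ⟨⟨⟨hm0, hmB⟩, hn0, le_trans hnt htB⟩, hCq, hnt⟩
  have hrow : ∀ n ∈ Finset.Icc (0:ℤ) tz,
      (Finset.Icc (0:ℤ) B).filter (fun m : ℤ => C (m, n))
        = Finset.Icc (0:ℤ) (tz + ⌊((tz - n : ℤ):ℝ)*α⌋) := by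
    intro n hn
    rw [Finset.mem_Icc] at hn
    have h1 : ∀ m : ℤ, m ∈ Finset.Icc (0:ℤ) B → (C (m, n) ↔ ((m:ℝ) ≤ (tz:ℝ)*(α+1) - (n:ℝ)*α)) := by
      intro m _; rw [hC]; constructor <;> intro <;> dsimp at * <;> linarith
    rw [Finset.filter_congr h1, filter_Icc_le]
    have h2 : (tz:ℝ)*(α+1) - (n:ℝ)*α = ((tz:ℤ):ℝ) + ((tz - n : ℤ):ℝ)*α := by push_cast; ring
    rw [h2, Int.floor_intCast_add]
    have h3 : tz + ⌊((tz - n : ℤ):ℝ)*α⌋ ≤ B := by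
      have h4 : ((tz - n : ℤ):ℝ)*α ≤ ((tz:ℤ):ℝ)*α := by
        apply mul_le_mul_of_nonneg_right _ (le_of_lt hα)
        have := hn.1
        push_cast
        have hnr : (0:ℝ) ≤ (n:ℝ) := by exact_mod_cast hn.1
        linarith
      have h5 : ⌊((tz - n : ℤ):ℝ)*α⌋ ≤ ⌊((tz:ℤ):ℝ)*α⌋ := Int.floor_le_floor h4
      have h6 : ⌊((tz:ℤ):ℝ)*α⌋ ≤ B - tz := by
        have h6a : (tz:ℝ)*α ≤ ((B - tz : ℤ):ℝ) := by
          push_cast [hB]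
          nlinarith [mul_le_mul_of_nonneg_left hα1β (by linarith : (0:ℝ) ≤ (tz:ℝ))]
        calc ⌊((tz:ℤ):ℝ)*α⌋ ≤ ⌊((B - tz : ℤ):ℝ)⌋ := Int.floor_le_floor h6a
        _ = B - tz := Int.floor_intCast _
      omega
    rw [min_eq_right h3]
  have hfloor_nn : ∀ n ∈ Finset.Icc (0:ℤ) tz, (0:ℤ) ≤ ⌊((tz - n : ℤ):ℝ)*α⌋ := by
    intro n hn
    rw [Finset.mem_Icc] at hn
    rw [Int.floor_nonneg]
    have h0 : (0:ℤ) ≤ tz - n := by omega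
    exact mul_nonneg (by exact_mod_cast h0) hα.le
  have hlowcard : (#(S.filter (fun q => q.2 ≤ tz)) : ℤ)
      = ∑ n ∈ Finset.Icc (0:ℤ) tz, (tz + 1 + ⌊((tz - n : ℤ):ℝ)*α⌋) := by
    rw [hlow_eq, card_filter_prod_right, Nat.cast_sum]
    refine Finset.sum_congr rfl fun n hn => ?_
    rw [hrow n hn, Int.card_Icc]
    have := hfloor_nn n hn
    rw [Int.toNat_of_nonneg (by omega)]
    ring
  -- high part
  have hhigh_eq : S.filter (fun q => ¬ q.2 ≤ tz)
      = ((Finset.Icc (0:ℤ) B) ×ˢ (Finset.Icc (0:ℤ) B)).filter (fun q => C q ∧ tz < q.2) := by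
    rw [hS, Finset.filter_filter]
    exact Finset.filter_congr fun q _ => by rw [not_le]
  have hcol : ∀ m ∈ Finset.Icc (0:ℤ) B,
      (Finset.Icc (0:ℤ) B).filter (fun n : ℤ => C (m, n) ∧ tz < n)
        = Finset.Icc (tz+1) (tz + ⌊((tz - m : ℤ):ℝ)/α⌋) := by
    intro m hm
    rw [Finset.mem_Icc] at hm
    have h1 : ∀ n : ℤ, n ∈ Finset.Icc (0:ℤ) B →
        ((C (m,n) ∧ tz < n) ↔ ((tz+1) ≤ n ∧ (n:ℝ) ≤ ((tz:ℝ)*(α+1) - (m:ℝ))/α)) := by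
      intro n _
      rw [hC]; dsimp only
      constructor
      · rintro ⟨hc, hlt⟩
        refine ⟨by omega, ?_⟩
        rw [le_div_iff₀ hα]
        linarith
      · rintro ⟨hge, hle⟩
        rw [le_div_iff₀ hα] at hle
        exact ⟨by linarith, by omega⟩
    rw [Finset.filter_congr h1, filter_Icc_between]
    have hfl : ⌊((tz:ℝ)*(α+1) - (m:ℝ))/α⌋ = tz + ⌊((tz - m : ℤ):ℝ)/α⌋ := by
      have he : ((tz:ℝ)*(α+1) - (m:ℝ))/α = ((tz:ℤ):ℝ) + ((tz - m:ℤ):ℝ)/α := by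
        field_simp
        push_cast; ring
      rw [he, Int.floor_intCast_add]
    rw [hfl]
    congr 1
    · omega
    · apply min_eq_right
      have h4 : ((tz - m:ℤ):ℝ)/α ≤ ((tz:ℤ):ℝ)*α⁻¹ := by
        rw [div_eq_mul_inv]
        apply mul_le_mul_of_nonneg_right _ hαinv.le
        have hmr : (0:ℝ) ≤ (m:ℝ) := by exact_mod_cast hm.1
        push_cast
        linarith
      have h5 := Int.floor_le_floor h4
      have h6 : ⌊((tz:ℤ):ℝ)*α⁻¹⌋ ≤ B - tz := by
        have h6a : ((tz:ℤ):ℝ)*α⁻¹ ≤ ((B - tz:ℤ):ℝ) := by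
          push_cast [hB]
          nlinarith [mul_le_mul_of_nonneg_left hαi1β (by linarith : (0:ℝ) ≤ (tz:ℝ))]
        calc ⌊((tz:ℤ):ℝ)*α⁻¹⌋ ≤ ⌊((B - tz:ℤ):ℝ)⌋ := Int.floor_le_floor h6a
        _ = B - tz := Int.floor_intCast _
      omega
  have hhighcard : (#(S.filter (fun q => ¬ q.2 ≤ tz)) : ℤ)
      = ∑ m ∈ Finset.Icc (0:ℤ) (tz - 1), ⌊((tz - m:ℤ):ℝ)/α⌋ := by
    rw [hhigh_eq, card_filter_prod_left, Nat.cast_sum]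
    have hterm : ∀ m ∈ Finset.Icc (0:ℤ) B,
        ((#((Finset.Icc (0:ℤ) B).filter (fun n => C (m,n) ∧ tz < n)) : ℕ) : ℤ)
          = ((⌊((tz - m:ℤ):ℝ)/α⌋).toNat : ℤ) := by
      intro m hm
      rw [hcol m hm, Int.card_Icc]
      congr 1
      omega
    rw [Finset.sum_congr rfl hterm]
    have hsub : Finset.Icc (0:ℤ) (tz-1) ⊆ Finset.Icc (0:ℤ) B :=
      Finset.Icc_subset_Icc_right (by omega)
    have hz : ∀ m ∈ Finset.Icc (0:ℤ) B, m ∉ Finset.Icc (0:ℤ) (tz-1) →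
        ((⌊((tz - m:ℤ):ℝ)/α⌋).toNat : ℤ) = 0 := by
      intro m hm hnm
      rw [Finset.mem_Icc] at hm hnm
      have hm1 : tz ≤ m := by omega
      have hx : ((tz - m:ℤ):ℝ)/α ≤ 0 := by
        apply div_nonpos_of_nonpos_of_nonneg _ hα.le
        have : ((tz - m:ℤ):ℝ) ≤ ((0:ℤ):ℝ) := by exact_mod_cast (by omega : tz - m ≤ (0:ℤ))
        simpa using this
      have : ⌊((tz - m:ℤ):ℝ)/α⌋ ≤ 0 := by
        calc ⌊((tz - m:ℤ):ℝ)/α⌋ ≤ ⌊(0:ℝ)⌋ := Int.floor_le_floor hx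
        _ = 0 := Int.floor_zero
      rw [Int.toNat_of_nonpos this]
      rfl
    rw [← Finset.sum_subset hsub hz]
    refine Finset.sum_congr rfl fun m hm => ?_
    rw [Finset.mem_Icc] at hm
    have : (0:ℤ) ≤ ⌊((tz - m:ℤ):ℝ)/α⌋ := by
      rw [Int.floor_nonneg]
      apply div_nonneg _ hα.le
      exact_mod_cast (by omega : (0:ℤ) ≤ tz - m)
    rw [Int.toNat_of_nonneg this]
  -- reindex sums
  have hreflect : ∑ n ∈ Finset.Icc (0:ℤ) tz, (tz + 1 + ⌊((tz - n:ℤ):ℝ)*α⌋)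
      = ∑ j ∈ Finset.Icc (0:ℤ) tz, (tz + 1 + ⌊(j:ℝ)*α⌋) := by
    refine Finset.sum_nbij' (fun n => tz - n) (fun j => tz - j) ?_ ?_ ?_ ?_ ?_
    · intro a ha; simp only [Finset.mem_Icc] at ha ⊢; omega
    · intro a ha; simp only [Finset.mem_Icc] at ha ⊢; omega
    · intro a _; omega
    · intro a _; omega
    · intro a _; rfl
  have hhighreindex : ∑ m ∈ Finset.Icc (0:ℤ) (tz-1), ⌊((tz - m:ℤ):ℝ)/α⌋
      = ∑ j ∈ Finset.Icc (1:ℤ) tz, ⌊(j:ℝ)/α⌋ := by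
    refine Finset.sum_nbij' (fun n => tz - n) (fun j => tz - j) ?_ ?_ ?_ ?_ ?_
    · intro a ha; simp only [Finset.mem_Icc] at ha ⊢; omega
    · intro a ha; simp only [Finset.mem_Icc] at ha ⊢; omega
    · intro a _; omega
    · intro a _; omega
    · intro a _; rfl
  have hzero_split : ∑ j ∈ Finset.Icc (0:ℤ) tz, (tz + 1 + ⌊(j:ℝ)*α⌋)
      = (tz + 1) + ∑ j ∈ Finset.Icc (1:ℤ) tz, (tz + 1 + ⌊(j:ℝ)*α⌋) := by
    have hins : Finset.Icc (0:ℤ) tz = insert 0 (Finset.Icc 1 tz) := by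
      ext x; simp only [Finset.mem_Icc, Finset.mem_insert]; omega
    rw [hins, Finset.sum_insert (by simp)]
    norm_num
  -- floor identity
  have hfid : ∀ j ∈ Finset.Icc (1:ℤ) tz, ⌊(j:ℝ)*α⌋ + ⌊(j:ℝ)/α⌋ = (β-2)*j - 1 := by
    intro j hj
    rw [Finset.mem_Icc] at hj
    have hj0 : j ≠ 0 := by omega
    have hirrj : Irrational ((j:ℝ)*α) := hirr.intCast_mul hj0
    have hinv : α⁻¹ = (β:ℝ) - 2 - α := by linarith
    have hdiv : (j:ℝ)/α = (((β-2)*j : ℤ):ℝ) + (-((j:ℝ)*α)) := by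
      rw [div_eq_mul_inv, hinv]
      push_cast
      ring
    rw [hdiv, Int.floor_intCast_add, Int.floor_neg, ceil_irr hirrj]
    ring
  -- Gauss sum
  have hmap : Finset.Icc (1:ℤ) tz
      = (Finset.range tz.toNat).map (⟨fun i : ℕ => (i:ℤ)+1, (have hinj : Function.Injective (fun i : ℕ => (i:ℤ)+1) := by intro a b hab; simpa using hab
        hinj)⟩ : ℕ ↪ ℤ) := by
    ext x
    simp only [Finset.mem_Icc, Finset.mem_map, Finset.mem_range, Function.Embedding.coeFn_mk]
    constructor
    · intro hx; exact ⟨(x-1).toNat, by omega, by omega⟩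
    · rintro ⟨a, ha, rfl⟩; omega
  have hN : (tz.toNat : ℤ) = tz := Int.toNat_of_nonneg (by omega)
  have hGnat : (∑ i ∈ Finset.range tz.toNat, (i+1)) * 2 = tz.toNat*tz.toNat + tz.toNat := by
    have hg := Finset.sum_range_id_mul_two tz.toNat
    have he : ∑ i ∈ Finset.range tz.toNat, (i+1) = (∑ i ∈ Finset.range tz.toNat, i) + tz.toNat := by
      rw [Finset.sum_add_distrib, Finset.sum_const, Finset.card_range, smul_eq_mul, mul_one]
    rw [he, add_mul, hg]
    cases' tz.toNat with n
    · rfl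
    · rw [Nat.succ_sub_one]
      ring
  have hSI : (∑ i ∈ Finset.range tz.toNat, ((i:ℤ)+1)) * 2 = tz*(tz+1) := by
    have : (∑ i ∈ Finset.range tz.toNat, ((i:ℤ)+1)) = ((∑ i ∈ Finset.range tz.toNat, (i+1) : ℕ) : ℤ) := by
      push_cast
      rfl
    rw [this]
    have := congrArg (fun n : ℕ => (n : ℤ)) hGnat
    push_cast at this
    rw [hN] at this
    linarith [this]
  have hgauss : (∑ j ∈ Finset.Icc (1:ℤ) tz, (tz + ((β:ℤ)-2)*j)) * 2
      = 2*tz*tz + (β-2)*(tz*(tz+1)) := by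
    rw [hmap, Finset.sum_map]
    simp only [Function.Embedding.coeFn_mk]
    rw [Finset.sum_add_distrib, Finset.sum_const, Finset.card_range, ← Finset.mul_sum,
      nsmul_eq_mul]
    linear_combination ((β:ℤ)-2)*hSI + 2*tz*hN
  -- final assembly
  have hcomb : ∑ j ∈ Finset.Icc (1:ℤ) tz, (tz + 1 + ⌊(j:ℝ)*α⌋) + ∑ j ∈ Finset.Icc (1:ℤ) tz, ⌊(j:ℝ)/α⌋
      = ∑ j ∈ Finset.Icc (1:ℤ) tz, (tz + ((β:ℤ)-2)*j) := by
    rw [← Finset.sum_add_distrib]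
    refine Finset.sum_congr rfl fun j hj => ?_
    have := hfid j hj
    linarith
  have hScard : (#S : ℤ) = (tz + 1) + ∑ j ∈ Finset.Icc (1:ℤ) tz, (tz + ((β:ℤ)-2)*j) := by
    have hs2 : ((#(S.filter (fun q => q.2 ≤ tz)) : ℤ) + (#(S.filter (fun q => ¬ q.2 ≤ tz)) : ℤ)) = (#S:ℤ) := by
      exact_mod_cast congrArg (fun n : ℕ => (n:ℤ)) hsplit
    rw [← hs2, hlowcard, hhighcard, hreflect, hhighreindex, hzero_split]
    omega
  rw [hScard]
  linear_combination hgauss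


lemma hull_eq (h k : ℝ) (hh : 0 < h) (hk : 0 < k) :
    convexHull ℝ {((0:ℝ),(0:ℝ)), (h,0), (0,k)}
      = {p : ℝ×ℝ | 0 ≤ p.1 ∧ 0 ≤ p.2 ∧ p.1*k + p.2*h ≤ h*k} := by
  apply subset_antisymm
  · apply convexHull_min
    · intro x hx
      simp only [Set.mem_insert_iff, Set.mem_singleton_iff] at hx
      rcases hx with rfl | rfl | rfl
      · refine ⟨le_refl _, le_refl _, by simp; positivity⟩
      · exact ⟨hh.le, le_refl _, by simp⟩
      · exact ⟨le_refl _, hk.le, by simp [mul_comm]⟩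
    · rintro p ⟨hp1, hp2, hp3⟩ q ⟨hq1, hq2, hq3⟩ a b ha hb hab
      have hfst : (a • p + b • q).1 = a * p.1 + b * q.1 := rfl
      have hsnd : (a • p + b • q).2 = a * p.2 + b * q.2 := rfl
      refine ⟨?_, ?_, ?_⟩
      · rw [hfst]; positivity
      · rw [hsnd]; positivity
      · rw [hfst, hsnd]
        have hsum : a*(h*k) + b*(h*k) = h*k := by rw [← add_mul, hab, one_mul]
        nlinarith [mul_le_mul_of_nonneg_left hp3 ha, mul_le_mul_of_nonneg_left hq3 hb, hsum]
  · rintro p ⟨hx, hy, hs⟩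
    rw [show ({((0:ℝ),(0:ℝ)), (h,0), (0,k)} : Set (ℝ×ℝ)) = insert ((0:ℝ),(0:ℝ)) {(h,0),(0,k)} from rfl,
      convexHull_insert ⟨(h,0), by simp⟩, convexHull_pair]
    rw [mem_convexJoin]
    set s := p.1/h + p.2/k with hsdef
    have hs0 : 0 ≤ s := by positivity
    have hs1 : s ≤ 1 := by
      rw [hsdef, div_add_div _ _ (ne_of_gt hh) (ne_of_gt hk), div_le_one (by positivity)]
      nlinarith
    rcases eq_or_lt_of_le hs0 with hseq | hspos
    · -- s = 0 → p = (0,0)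
      have hsum : p.1/h + p.2/k = 0 := by rw [← hsdef]; exact hseq.symm
      have h2 : 0 ≤ p.1/h := by positivity
      have h3 : 0 ≤ p.2/k := by positivity
      have hx0 : p.1 = 0 := by
        have h1 : p.1/h = 0 := by linarith
        field_simp at h1; simpa using h1
      have hy0 : p.2 = 0 := by
        have h1 : p.2/k = 0 := by linarith
        field_simp at h1; simpa using h1
      refine ⟨(0,0), rfl, (h,0), left_mem_segment _ _ _, ?_⟩
      have : p = ((0:ℝ),(0:ℝ)) := Prod.ext hx0 hy0
      rw [this]
      exact left_mem_segment _ _ _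
    · refine ⟨(0,0), rfl, (p.1/s, p.2/s), ?_, ?_⟩
      · have hsne : s ≠ 0 := ne_of_gt hspos
        refine ⟨p.1/(s*h), p.2/(s*k), by positivity, by positivity, ?_, ?_⟩
        · have he : p.1/(s*h) + p.2/(s*k) = (p.1/h + p.2/k)/s := by
            field_simp
          rw [he, ← hsdef, div_self hsne]
        · have e1 : (p.1/(s*h)) • ((h:ℝ),(0:ℝ)) + (p.2/(s*k)) • ((0:ℝ),k)
              = (p.1/(s*h)*h + 0, 0 + p.2/(s*k)*k) := by
            simp [Prod.ext_iff, mul_comm]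
          rw [e1]
          refine Prod.ext ?_ ?_ <;> field_simp <;> ring
      · refine ⟨1 - s, s, by linarith, hs0, by ring, ?_⟩
        have e2 : (1 - s) • ((0:ℝ),(0:ℝ)) + s • (p.1/s, p.2/s) = (s*(p.1/s), s*(p.2/s)) := by
          simp [Prod.ext_iff]
        rw [e2]
        refine Prod.ext ?_ ?_ <;> field_simp

set_option maxHeartbeats 2000000 in
theorem stmt_8 (h k : ℝ) (hh : Irrational h) (hk : Irrational k)
    (hhpos : 0 < h) (hkpos : 0 < k) (hhk : 1 / h + 1 / k = 1)
    (β : ℤ) (hβ : h + k = (β : ℝ))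
    (T P : Set (ℝ × ℝ))
    (hT : T = convexHull ℝ {((0 : ℝ), (0 : ℝ)), (h, 0), (0, k)})
    (hP : P = T ∪ (fun p : ℝ × ℝ => (p.1, -p.2)) '' T)
    (t : ℕ) (ht : 0 < t) :
    ((((t : ℝ) • P) ∩ latticeZ2).ncard : ℝ) =
      (h + k) * t ^ 2 + (h + k) * t - (⌊h * t⌋ : ℝ) + 1 := by
  classical
  -- basic facts
  have hhne : h ≠ 0 := ne_of_gt hhpos
  have hkne : k ≠ 0 := ne_of_gt hkpos
  have h1 : 1 < h := by
    by_contra hle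
    push_neg at hle
    have h2 : 1 ≤ 1/h := by rw [le_div_iff₀ hhpos]; linarith
    have h3 : 0 < 1/k := by positivity
    linarith
  have k1 : 1 < k := by
    by_contra hle
    push_neg at hle
    have h2 : 1 ≤ 1/k := by rw [le_div_iff₀ hkpos]; linarith
    have h3 : 0 < 1/h := by positivity
    linarith
  have hmul : h * k = h + k := by
    field_simp at hhk
    linarith
  set α := h - 1 with hαdef
  have hα : 0 < α := by rw [hαdef]; linarith
  have hirrα : Irrational α := by simpa using hh.sub_intCast 1
  have hαk : α * k = h := by rw [hαdef]; linear_combination hmul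
  have hinvα : α⁻¹ = k - 1 := by
    have hprod : α * (k - 1) = 1 := by rw [hαdef]; linear_combination hmul
    exact (eq_inv_of_mul_eq_one_right hprod).symm
  have hid : α + α⁻¹ = (β:ℝ) - 2 := by rw [hinvα, hαdef, ← hβ]; ring
  have htR : (1:ℝ) ≤ (t:ℝ) := by exact_mod_cast ht
  set tz : ℤ := (t:ℤ) with htzdef
  have htz : 1 ≤ tz := by rw [htzdef]; exact_mod_cast ht
  have htzR : ((tz:ℤ):ℝ) = (t:ℝ) := by push_cast [htzdef]; rfl
  have hβ3 : 3 ≤ β := by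
    have h2b : (2:ℝ) < (β:ℝ) := by rw [← hβ]; linarith
    have : (2:ℤ) < β := by exact_mod_cast h2b
    omega
  have hB0 : 0 ≤ β * tz := by positivity
  have htB : tz ≤ β * tz := by nlinarith
  -- geometric description
  have hTeq : T = {p : ℝ×ℝ | 0 ≤ p.1 ∧ 0 ≤ p.2 ∧ p.1*k + p.2*h ≤ h*k} := by
    rw [hT, hull_eq h k hhpos hkpos]
  have htpos : (0:ℝ) < (t:ℝ) := by linarith
  have htne : (t:ℝ) ≠ 0 := ne_of_gt htpos
  have htT : (t:ℝ) • T = {p : ℝ×ℝ | 0 ≤ p.1 ∧ 0 ≤ p.2 ∧ p.1*k + p.2*h ≤ (t:ℝ)*(h*k)} := by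
    ext p
    rw [Set.mem_smul_set]
    constructor
    · rintro ⟨q, hq, rfl⟩
      rw [hTeq] at hq
      obtain ⟨h1q, h2q, h3q⟩ := hq
      have e1 : (((t:ℝ)) • q).1 = (t:ℝ) * q.1 := rfl
      have e2 : (((t:ℝ)) • q).2 = (t:ℝ) * q.2 := rfl
      refine ⟨by rw [e1]; positivity, by rw [e2]; positivity, ?_⟩
      rw [e1, e2]
      nlinarith [mul_le_mul_of_nonneg_left h3q htpos.le]
    · rintro ⟨hp1, hp2, hp3⟩
      refine ⟨((t:ℝ)⁻¹ * p.1, (t:ℝ)⁻¹ * p.2), ?_, ?_⟩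
      · rw [hTeq]
        refine ⟨by positivity, by positivity, ?_⟩
        have hinv : (0:ℝ) ≤ (t:ℝ)⁻¹ := by positivity
        have h4 : (t:ℝ)⁻¹ * ((t:ℝ)*(h*k)) = h*k := by field_simp
        nlinarith [mul_le_mul_of_nonneg_left hp3 hinv, h4]
      · refine Prod.ext ?_ ?_
        · show (t:ℝ) * ((t:ℝ)⁻¹ * p.1) = p.1
          field_simp
        · show (t:ℝ) * ((t:ℝ)⁻¹ * p.2) = p.2
          field_simp
  have himg : (t:ℝ) • ((fun p : ℝ×ℝ => (p.1, -p.2)) '' T)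
      = (fun p : ℝ×ℝ => (p.1, -p.2)) '' ((t:ℝ) • T) := by
    ext p
    simp only [Set.mem_smul_set, Set.mem_image]
    constructor
    · rintro ⟨q, ⟨r, hr, rfl⟩, rfl⟩
      exact ⟨(t:ℝ) • r, ⟨r, hr, rfl⟩, by refine Prod.ext rfl ?_; show -((t:ℝ)*r.2) = (t:ℝ)*(-r.2); ring⟩
    · rintro ⟨q, ⟨r, hr, rfl⟩, rfl⟩
      exact ⟨(r.1, -r.2), ⟨r, hr, rfl⟩, by refine Prod.ext rfl ?_; show (t:ℝ)*(-r.2) = -((t:ℝ)*r.2); ring⟩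
  have hρmem : ∀ (S : Set (ℝ×ℝ)) (p : ℝ×ℝ),
      (p ∈ (fun p : ℝ×ℝ => (p.1, -p.2)) '' S ↔ (p.1, -p.2) ∈ S) := by
    intro S p
    constructor
    · rintro ⟨r, hr, rfl⟩
      simpa using hr
    · intro hr
      exact ⟨(p.1, -p.2), hr, by simp⟩
  have hPmem : ∀ p : ℝ×ℝ, (p ∈ (t:ℝ) • P ↔ (0 ≤ p.1 ∧ p.1*k + |p.2| *h ≤ (t:ℝ)*(h*k))) := by
    intro p
    rw [hP, Set.smul_set_union, Set.mem_union, himg, hρmem, htT]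
    constructor
    · rintro (⟨h1p, h2p, h3p⟩ | ⟨h1p, h2p, h3p⟩)
      · exact ⟨h1p, by rwa [abs_of_nonneg h2p]⟩
      · simp only at h1p h2p h3p
        refine ⟨h1p, ?_⟩
        rw [abs_of_nonpos (by linarith)]
        exact h3p
    · rintro ⟨h1p, h3p⟩
      rcases le_total 0 p.2 with hc | hc
      · exact Or.inl ⟨h1p, hc, by rwa [abs_of_nonneg hc] at h3p⟩
      · refine Or.inr ⟨h1p, by simpa using hc, ?_⟩
        rw [abs_of_nonpos hc] at h3p
        exact h3p
  -- lattice points as a Finset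
  set e : ℤ×ℤ → ℝ×ℝ := fun q => ((q.1:ℝ), (q.2:ℝ)) with hedef
  have heinj : Function.Injective e := by
    rintro ⟨a1,a2⟩ ⟨b1,b2⟩ hab
    rw [hedef] at hab
    simp only [Prod.mk.injEq] at hab ⊢
    exact ⟨by exact_mod_cast hab.1, by exact_mod_cast hab.2⟩
  set F : Finset (ℤ×ℤ) := ((Finset.Icc (0:ℤ) (β*tz)) ×ˢ (Finset.Icc (-(β*tz)) (β*tz))).filter
      (fun q : ℤ×ℤ => (q.1:ℝ)*k + |(q.2:ℝ)| *h ≤ (t:ℝ)*(h*k)) with hFdef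
  have hBcast : (((β*tz : ℤ)):ℝ) = (β:ℝ)*(t:ℝ) := by push_cast [htzdef]; ring
  have hset : ((t:ℝ) • P) ∩ latticeZ2 = e '' ↑F := by
    ext p
    constructor
    · rintro ⟨hpP, m, n, rfl⟩
      rw [hPmem] at hpP
      obtain ⟨h1p, h3p⟩ := hpP
      simp only at h1p h3p
      refine ⟨(m,n), ?_, rfl⟩
      rw [Finset.mem_coe, hFdef, Finset.mem_filter, Finset.mem_product, Finset.mem_Icc, Finset.mem_Icc]
      have hm0 : (0:ℤ) ≤ m := by exact_mod_cast h1p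
      have hmRR : (0:ℝ) ≤ (m:ℝ) := by exact_mod_cast hm0
      have habs : (0:ℝ) ≤ |(n:ℝ)| *h := by positivity
      have hmR2 : (m:ℝ) ≤ (t:ℝ)*h := by
        have := (mul_le_mul_iff_of_pos_right hkpos).mp (by nlinarith : (m:ℝ)*k ≤ ((t:ℝ)*h)*k)
        exact this
      have hmB : m ≤ β*tz := by
        have : (m:ℝ) ≤ (((β*tz : ℤ)):ℝ) := by rw [hBcast, ← hβ]; nlinarith
        exact_mod_cast this
      have hnR2 : |(n:ℝ)| ≤ (t:ℝ)*k := by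
        have := (mul_le_mul_iff_of_pos_right hhpos).mp (by nlinarith : |(n:ℝ)| *h ≤ ((t:ℝ)*k)*h)
        exact this
      have hnB : |n| ≤ β*tz := by
        have h5 : ((|n| : ℤ):ℝ) ≤ (((β*tz : ℤ)):ℝ) := by
          rw [hBcast, ← hβ]
          push_cast
          nlinarith
        exact_mod_cast h5
      have hnabs := abs_le.mp hnB
      exact ⟨⟨⟨hm0, hmB⟩, hnabs.1, hnabs.2⟩, h3p⟩
    · rintro ⟨⟨m,n⟩, hmn, rfl⟩
      rw [Finset.mem_coe, hFdef, Finset.mem_filter, Finset.mem_product, Finset.mem_Icc, Finset.mem_Icc] at hmn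
      obtain ⟨⟨⟨hm0, _⟩, _⟩, hcond⟩ := hmn
      refine ⟨?_, ⟨m, n, rfl⟩⟩
      rw [hPmem]
      simp only [hedef]
      exact ⟨by exact_mod_cast hm0, hcond⟩
  have hcard1 : (((t:ℝ) • P) ∩ latticeZ2).ncard = F.card := by
    rw [hset, Set.ncard_image_of_injective _ heinj, Set.ncard_coe_finset]
  -- inclusion-exclusion
  set Fpos := F.filter (fun q => 0 ≤ q.2) with hFpos
  set Fneg := F.filter (fun q => q.2 ≤ 0) with hFneg
  set F0 := F.filter (fun q => q.2 = 0) with hF0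
  have hunion : Fpos ∪ Fneg = F := by
    ext q
    simp only [hFpos, hFneg, Finset.mem_union, Finset.mem_filter]
    constructor
    · rintro (⟨hq,_⟩|⟨hq,_⟩) <;> exact hq
    · intro hq
      rcases le_total 0 q.2 with hc|hc
      · exact Or.inl ⟨hq, hc⟩
      · exact Or.inr ⟨hq, hc⟩
  have hinter : Fpos ∩ Fneg = F0 := by
    ext q
    simp only [hFpos, hFneg, hF0, Finset.mem_inter, Finset.mem_filter]
    constructor
    · rintro ⟨⟨hq,hposq⟩,⟨_,hnegq⟩⟩
      exact ⟨hq, le_antisymm hnegq hposq⟩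
    · rintro ⟨hq, hz⟩
      exact ⟨⟨hq, hz.ge⟩, ⟨hq, hz.le⟩⟩
  have hie : F.card + F0.card = Fpos.card + Fneg.card := by
    rw [← hunion, ← hinter]
    exact Finset.card_union_add_card_inter _ _
  have hFmemneg : ∀ q : ℤ×ℤ, q ∈ F → ((q.1, -q.2) : ℤ×ℤ) ∈ F := by
    intro q hq
    rw [hFdef, Finset.mem_filter, Finset.mem_product, Finset.mem_Icc, Finset.mem_Icc] at hq ⊢
    obtain ⟨⟨hm, hn⟩, hc⟩ := hq
    refine ⟨⟨hm, by omega, by omega⟩, ?_⟩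
    have habs : |((-q.2 : ℤ):ℝ)| = |(q.2:ℝ)| := by push_cast; rw [abs_neg]
    show ((q.1:ℝ))*k + |((-q.2 : ℤ):ℝ)| *h ≤ (t:ℝ)*(h*k)
    rw [habs]
    exact hc
  have hnegcard : Fneg.card = Fpos.card := by
    apply Finset.card_nbij' (fun q => (q.1, -q.2)) (fun q => (q.1, -q.2))
    · intro q hq
      rw [Finset.mem_coe, hFneg, Finset.mem_filter] at hq
      rw [Finset.mem_coe, hFpos, Finset.mem_filter]
      exact ⟨hFmemneg q hq.1, by simpa using neg_nonneg.mpr hq.2⟩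
    · intro q hq
      rw [Finset.mem_coe, hFpos, Finset.mem_filter] at hq
      rw [Finset.mem_coe, hFneg, Finset.mem_filter]
      exact ⟨hFmemneg q hq.1, by simpa using neg_nonpos.mpr hq.2⟩
    · intro q _; simp
    · intro q _; simp
  -- F0 card
  have hth0 : 0 ≤ ⌊(t:ℝ)*h⌋ := Int.floor_nonneg.mpr (by positivity)
  have hthB : ⌊(t:ℝ)*h⌋ ≤ β*tz := by
    have h5 : (t:ℝ)*h ≤ (((β*tz : ℤ)):ℝ) := by rw [hBcast, ← hβ]; nlinarith
    calc ⌊(t:ℝ)*h⌋ ≤ ⌊(((β*tz : ℤ)):ℝ)⌋ := Int.floor_le_floor h5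
    _ = β*tz := Int.floor_intCast _
  have hF0card : (F0.card : ℤ) = ⌊(t:ℝ)*h⌋ + 1 := by
    have hbij : F0.card = (Finset.Icc (0:ℤ) ⌊(t:ℝ)*h⌋).card := by
      apply Finset.card_nbij' (fun q => q.1) (fun m => (m, 0))
      · intro q hq
        rw [Finset.mem_coe, hF0, Finset.mem_filter] at hq
        obtain ⟨hqF, hq2⟩ := hq
        rw [hFdef, Finset.mem_filter, Finset.mem_product, Finset.mem_Icc, Finset.mem_Icc] at hqF
        rw [Finset.mem_coe, Finset.mem_Icc]
        refine ⟨hqF.1.1.1, ?_⟩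
        rw [Int.le_floor]
        have hc := hqF.2
        rw [hq2] at hc
        simp only [Int.cast_zero, abs_zero, zero_mul, add_zero] at hc
        exact (mul_le_mul_iff_of_pos_right hkpos).mp (by nlinarith)
      · intro m hm
        rw [Finset.mem_coe, Finset.mem_Icc] at hm
        rw [Finset.mem_coe, hF0, Finset.mem_filter]
        refine ⟨?_, rfl⟩
        rw [hFdef, Finset.mem_filter, Finset.mem_product, Finset.mem_Icc, Finset.mem_Icc]
        refine ⟨⟨⟨hm.1, by dsimp only; omega⟩, by dsimp only; omega, by dsimp only; omega⟩, ?_⟩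
        have hmle : (m:ℝ) ≤ (t:ℝ)*h := Int.le_floor.mp hm.2
        show ((m:ℝ))*k + |((0:ℤ):ℝ)| *h ≤ (t:ℝ)*(h*k)
        simp only [Int.cast_zero, abs_zero, zero_mul, add_zero]
        nlinarith
      · intro q hq
        rw [Finset.mem_coe, hF0, Finset.mem_filter] at hq
        exact Prod.ext rfl hq.2.symm
      · intro m _; rfl
    rw [hbij, Int.card_Icc, Int.toNat_of_nonneg (by omega)]
    omega
  -- Fpos card via count_triangle
  have hcondequiv : ∀ m n : ℤ, 0 ≤ n →
      (((m:ℝ)*k + |(n:ℝ)| *h ≤ (t:ℝ)*(h*k)) ↔ ((m:ℝ) + (n:ℝ)*α ≤ ((tz:ℤ):ℝ)*(α+1))) := by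
    intro m n hn
    have hnR : (0:ℝ) ≤ (n:ℝ) := by exact_mod_cast hn
    have e1 : ((m:ℝ) + (n:ℝ)*α)*k = (m:ℝ)*k + (n:ℝ)*h := by linear_combination (n:ℝ)*hαk
    have e2 : (((t:ℝ))*(α+1))*k = (t:ℝ)*(h*k) := by rw [hαdef]; ring
    rw [abs_of_nonneg hnR, htzR]
    constructor
    · intro hcond
      rw [← mul_le_mul_iff_of_pos_right hkpos, e1, e2]
      exact hcond
    · intro hcond
      have h5 := (mul_le_mul_iff_of_pos_right hkpos).mpr hcond
      rw [e1, e2] at h5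
      exact h5
  have hFposS : Fpos = ((Finset.Icc (0:ℤ) (β*tz)) ×ˢ (Finset.Icc (0:ℤ) (β*tz))).filter
      (fun q : ℤ×ℤ => (q.1:ℝ) + (q.2:ℝ)*α ≤ ((tz:ℤ):ℝ)*(α+1)) := by
    rw [hFpos, hFdef, Finset.filter_filter]
    ext q
    simp only [Finset.mem_filter, Finset.mem_product, Finset.mem_Icc]
    constructor
    · rintro ⟨⟨hm, hn⟩, hc, hq2⟩
      exact ⟨⟨hm, hq2, hn.2⟩, (hcondequiv q.1 q.2 hq2).mp hc⟩
    · rintro ⟨⟨hm, hn0, hnB⟩, hc⟩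
      exact ⟨⟨hm, by omega, hnB⟩, (hcondequiv q.1 q.2 hn0).mpr hc, hn0⟩
  have hFposcard : 2 * (Fpos.card : ℤ) = β*tz^2 + β*tz + 2 := by
    rw [hFposS]
    exact count_triangle α hirrα hα β tz hid htz
  -- final assembly
  rw [hcard1]
  have hFcard : (F.card : ℤ) = β*tz^2 + β*tz + 1 - ⌊(t:ℝ)*h⌋ := by
    have hieZ : (F.card:ℤ) + (F0.card:ℤ) = (Fpos.card:ℤ) + (Fneg.card:ℤ) := by exact_mod_cast hie
    have hnegZ : (Fneg.card:ℤ) = (Fpos.card:ℤ) := by exact_mod_cast hnegcard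
    linarith
  have hfinal := congrArg (fun z : ℤ => (z:ℝ)) hFcard
  push_cast [htzdef] at hfinal
  rw [hfinal, ← hβ, mul_comm (t:ℝ) h]
  ring
end

section
/- Let h, k be positive irrational reals with 1/h + 1/k = 1 and h + k = β ∈ ℤ. Then for every positive integer t, the count #(tT ∩ ℤ²) for T = conv{(0,0),(h,0),(0,k)} equals (β/2)t² + (β/2)t + 1. -/
set_option maxHeartbeats 1000000

open Pointwise

lemma floor_neg_irr (x : ℝ) (hx : Irrational x) : ⌊-x⌋ = -⌊x⌋ - 1 := by
  rw [Int.floor_eq_iff]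
  have h1 := Int.floor_le x
  have h2 := Int.lt_floor_add_one x
  have hne : x ≠ (⌊x⌋ : ℝ) := fun he => hx.ne_int _ he
  push_cast
  constructor <;> [linarith []; linarith [lt_of_le_of_ne h1 (Ne.symm hne)]]


lemma recip (α : ℝ) (hα : Irrational α) (h0 : 0 < α) (p : ℕ) :
    (∑ i ∈ Finset.range (p+1), ⌊(i:ℝ)*α⌋) +
      (∑ j ∈ Finset.range ((⌊(p:ℝ)*α⌋).toNat + 1), ⌊(j:ℝ)/α⌋) = p * ⌊(p:ℝ)*α⌋ := by
  induction p with
  | zero => simp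
  | succ p ih =>
    have hq0 : (0:ℤ) ≤ ⌊(p:ℝ)*α⌋ := Int.floor_nonneg.2 (by positivity)
    have hq0' : (0:ℤ) ≤ ⌊((p:ℝ)+1)*α⌋ := Int.floor_nonneg.2 (by positivity)
    set q : ℕ := (⌊(p:ℝ)*α⌋).toNat with hq
    set q' : ℕ := (⌊((p:ℝ)+1)*α⌋).toNat with hq'
    have hqc : (q : ℤ) = ⌊(p:ℝ)*α⌋ := Int.toNat_of_nonneg hq0
    have hqc' : (q' : ℤ) = ⌊((p:ℝ)+1)*α⌋ := Int.toNat_of_nonneg hq0'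
    have hle : q ≤ q' := by
      have : ⌊(p:ℝ)*α⌋ ≤ ⌊((p:ℝ)+1)*α⌋ := Int.floor_le_floor (by nlinarith)
      omega
    have hsplit : ∑ j ∈ Finset.range (q'+1), ⌊(j:ℝ)/α⌋ =
        (∑ j ∈ Finset.range (q+1), ⌊(j:ℝ)/α⌋) + ∑ j ∈ Finset.Ico (q+1) (q'+1), ⌊(j:ℝ)/α⌋ := by
      simp only [Finset.range_eq_Ico]
      exact (Finset.sum_Ico_consecutive _ (by omega) (by omega)).symm
    have hconst : ∀ j ∈ Finset.Ico (q+1) (q'+1), ⌊(j:ℝ)/α⌋ = (p:ℤ) := by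
      intro j hj
      rw [Finset.mem_Ico] at hj
      have h1 : (p:ℝ)*α < j := by
        have hj1 : ⌊(p:ℝ)*α⌋ + 1 ≤ (j:ℤ) := by omega
        have := Int.lt_floor_add_one ((p:ℝ)*α)
        have : ((⌊(p:ℝ)*α⌋:ℝ) + 1) ≤ (j:ℝ) := by exact_mod_cast hj1
        have := Int.lt_floor_add_one ((p:ℝ)*α)
        linarith
      have h2 : (j:ℝ) < ((p:ℝ)+1)*α := by
        have hj2 : (j:ℤ) ≤ ⌊((p:ℝ)+1)*α⌋ := by omega
        have hj2' : (j:ℝ) ≤ ((p:ℝ)+1)*α := le_trans (by exact_mod_cast hj2) (Int.floor_le _)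
        have hne : (j:ℝ) ≠ ((p:ℝ)+1)*α := by
          intro he
          have hirr : Irrational (((p+1:ℕ):ℝ)*α) := hα.natCast_mul (by omega)
          rw [show ((p+1:ℕ):ℝ) = (p:ℝ)+1 by push_cast; ring, ← he] at hirr
          exact hirr ⟨j, by norm_cast⟩
        exact lt_of_le_of_ne hj2' hne
      rw [Int.floor_eq_iff]
      constructor
      · rw [le_div_iff₀ h0]; push_cast; linarith
      · rw [div_lt_iff₀ h0]; push_cast; linarith
    have hfloor : ⌊((p+1:ℕ):ℝ)*α⌋ = (q' : ℤ) := by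
      rw [hqc']; norm_num
    rw [show (⌊((p+1:ℕ):ℝ)*α⌋).toNat = q' from by rw [hfloor]; simp]
    rw [Finset.sum_range_succ, hfloor, hsplit, Finset.sum_congr rfl hconst,
      Finset.sum_const, nsmul_eq_mul]
    have hcq : ((q' - q : ℕ) : ℤ) = (q' : ℤ) - q := by omega
    rw [Nat.card_Ico, show q' + 1 - (q+1) = q' - q from by omega]
    rw [← hqc] at ih
    push_cast [hcq] at ih ⊢
    linear_combination ih

lemma floor_add_floor (h k : ℝ) (hh : Irrational h) (hk : Irrational k)
    (β : ℤ) (hβ : h + k = (β : ℝ)) (j : ℕ) (hj : 0 < j) :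
    ⌊(j:ℝ)*h⌋ + ⌊(j:ℝ)*k⌋ = j * β - 1 := by
  have h1 : Irrational ((j:ℝ)*h) := by simpa using hh.natCast_mul (by omega : j ≠ 0)
  have h2 : Irrational ((j:ℝ)*k) := by simpa using hk.natCast_mul (by omega : j ≠ 0)
  have hfr1 : 0 < Int.fract ((j:ℝ)*h) := by
    rw [Int.fract_pos]; exact fun he => h1.ne_int _ he
  have hfr2 : 0 < Int.fract ((j:ℝ)*k) := by
    rw [Int.fract_pos]; exact fun he => h2.ne_int _ he
  have hlt1 := Int.fract_lt_one ((j:ℝ)*h)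
  have hlt2 := Int.fract_lt_one ((j:ℝ)*k)
  have e1 := Int.floor_add_fract ((j:ℝ)*h)
  have e2 := Int.floor_add_fract ((j:ℝ)*k)
  have hsum : ((j:ℝ)*h) + ((j:ℝ)*k) = ((j * β : ℤ):ℝ) := by push_cast; rw [← hβ]; ring
  set s : ℤ := j * β - ⌊(j:ℝ)*h⌋ - ⌊(j:ℝ)*k⌋ with hs
  have hsr : (s:ℝ) = Int.fract ((j:ℝ)*h) + Int.fract ((j:ℝ)*k) := by
    push_cast [hs]
    linarith [e1, e2, hsum, (by exact_mod_cast hsum : (j:ℝ)*h + (j:ℝ)*k = (j:ℝ)*(β:ℝ))]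
  have hs1 : s = 1 := by
    have l1 : (0:ℝ) < (s:ℝ) := by rw [hsr]; linarith
    have l2 : (s:ℝ) < 2 := by rw [hsr]; linarith
    have : (0:ℤ) < s := by exact_mod_cast l1
    have : s < 2 := by exact_mod_cast l2
    omega
  omega

lemma tri_char (h k : ℝ) (hh : 1 < h) (hk : 1 < k) :
    convexHull ℝ {((0 : ℝ), (0 : ℝ)), (h, 0), (0, k)} =
      {p : ℝ × ℝ | 0 ≤ p.1 ∧ 0 ≤ p.2 ∧ k * p.1 + h * p.2 ≤ h * k} := by
  have hh0 : (0:ℝ) < h := by linarith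
  have hk0 : (0:ℝ) < k := by linarith
  apply le_antisymm
  · apply convexHull_min
    · rintro p hp
      simp only [Set.mem_insert_iff, Set.mem_singleton_iff] at hp
      rcases hp with rfl | rfl | rfl
      · exact ⟨le_refl 0, le_refl 0, by simp; positivity⟩
      · exact ⟨hh0.le, le_refl 0, by simp [mul_comm]⟩
      · exact ⟨le_refl 0, hk0.le, by simp⟩
    · have c1 : Convex ℝ {p : ℝ × ℝ | 0 ≤ p.1} :=
        convex_halfSpace_ge (LinearMap.isLinear (LinearMap.fst ℝ ℝ ℝ)) 0
      have c2 : Convex ℝ {p : ℝ × ℝ | 0 ≤ p.2} :=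
        convex_halfSpace_ge (LinearMap.isLinear (LinearMap.snd ℝ ℝ ℝ)) 0
      have c3 : Convex ℝ {p : ℝ × ℝ | k * p.1 + h * p.2 ≤ h * k} := by
        have : IsLinearMap ℝ (fun p : ℝ × ℝ => k * p.1 + h * p.2) := by
          constructor
          · intro a b; simp [Prod.fst_add, Prod.snd_add]; ring
          · intro c a; simp [Prod.smul_fst, Prod.smul_snd, smul_eq_mul]; ring
        exact convex_halfSpace_le this (h * k)
      have := (c1.inter c2).inter c3
      convert this using 1
      · rfl
      · ext p; simp [Set.mem_inter_iff]; tauto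
  · rintro ⟨x, y⟩ ⟨hx, hy, hxy⟩
    have hmem : ∀ i : Fin 3, (![((0:ℝ),(0:ℝ)), (h,0), (0,k)] i) ∈
        ({((0 : ℝ), (0 : ℝ)), (h, 0), (0, k)} : Set (ℝ × ℝ)) := by
      intro i; fin_cases i <;> simp
    have key := Finset.centerMass_mem_convexHull (Finset.univ : Finset (Fin 3))
      (w := ![1 - x/h - y/k, x/h, y/k]) (s := ({((0 : ℝ), (0 : ℝ)), (h, 0), (0, k)} : Set (ℝ × ℝ)))
      ?_ ?_ (z := ![((0:ℝ),(0:ℝ)), (h,0), (0,k)]) ?_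
    · have hw1 : ∑ i : Fin 3, (![1 - x/h - y/k, x/h, y/k]) i = 1 := by
        simp [Fin.sum_univ_three]; ring
      rw [Finset.centerMass_eq_of_sum_1 _ _ hw1] at key
      convert key using 1
      simp [Fin.sum_univ_three, Prod.smul_mk, smul_eq_mul]
      constructor
      · field_simp
      · field_simp
    · intro i _
      fin_cases i <;> simp
      · have h1 : x/h + y/k ≤ 1 := by
          rw [div_add_div _ _ (ne_of_gt hh0) (ne_of_gt hk0), div_le_one (by positivity)]
          nlinarith
        linarith
      · positivity
      · positivity
    · simp [Fin.sum_univ_three]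
      have h1 : x/h + y/k ≤ 1 := by
        rw [div_add_div _ _ (ne_of_gt hh0) (ne_of_gt hk0), div_le_one (by positivity)]
        nlinarith
      linarith
    · exact fun i _ => hmem i

-- the counting lemma
lemma count_main (h k : ℝ) (hh : Irrational h) (hk : Irrational k)
    (hh1 : 1 < h) (hk1 : 1 < k) (hunit : (h - 1) * (k - 1) = 1)
    (β : ℤ) (hβ : h + k = (β : ℝ)) (t : ℕ) (ht : 0 < t)
    (A R : ℕ) (hA : (A : ℤ) = ⌊(t:ℝ)*h⌋) (hAR : A = t + R) :
    2 * (∑ m ∈ Finset.range (A+1), ((⌊(t:ℝ)*k - m*(k-1)⌋) + 1)) = β * t * (t+1) + 2 := by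
  have hk1' : Irrational (k - 1) := by
    have := hk.sub_intCast 1; simpa using this
  have hh1' : Irrational (h - 1) := by
    have := hh.sub_intCast 1; simpa using this
  have hk10 : (0:ℝ) < k - 1 := by linarith
  have hh10 : (0:ℝ) < h - 1 := by linarith
  -- rewrite each term
  have hterm : ∀ m ∈ Finset.range (A+1), (⌊(t:ℝ)*k - m*(k-1)⌋ + 1 : ℤ)
      = (t + 1) + ⌊((t:ℝ) - m)*(k-1)⌋ := by
    intro m _
    have : (t:ℝ)*k - m*(k-1) = ((t:ℝ) - m)*(k-1) + t := by ring
    rw [this, Int.floor_add_natCast]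
    ring
  rw [Finset.sum_congr rfl hterm, Finset.sum_add_distrib, Finset.sum_const, Finset.card_range,
    nsmul_eq_mul]
  -- split the floor-sum at t
  have hsplit : ∑ m ∈ Finset.range (A+1), ⌊((t:ℝ) - m)*(k-1)⌋
      = (∑ m ∈ Finset.range (t+1), ⌊((t:ℝ) - m)*(k-1)⌋)
        + ∑ w ∈ Finset.range R, ⌊((t:ℝ) - (t+1+w))*(k-1)⌋ := by
    subst hAR
    rw [show t + R + 1 = (t+1) + R from by ring, Finset.sum_range_add]
    congr 1
    apply Finset.sum_congr rfl
    intro w _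
    congr 2
    push_cast
    ring
  rw [hsplit]
  -- first part: reflect
  have hfirst : ∑ m ∈ Finset.range (t+1), ⌊((t:ℝ) - m)*(k-1)⌋
      = ∑ i ∈ Finset.range (t+1), ⌊(i:ℝ)*(k-1)⌋ := by
    rw [← Finset.sum_range_reflect]
    apply Finset.sum_congr rfl
    intro j hj
    rw [Finset.mem_range] at hj
    congr 2
    have : t + 1 - 1 - j = t - j := by omega
    rw [this]
    push_cast [Nat.cast_sub (by omega : j ≤ t)]
    ring
  -- second part: negative floors
  have hsecond : ∑ w ∈ Finset.range R, ⌊((t:ℝ) - (t+1+w))*(k-1)⌋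
      = - (R:ℤ) - ∑ w ∈ Finset.range R, ⌊((w+1:ℕ):ℝ)*(k-1)⌋ := by
    have : ∀ w ∈ Finset.range R, ⌊((t:ℝ) - (t+1+w))*(k-1)⌋
        = -⌊((w+1:ℕ):ℝ)*(k-1)⌋ - 1 := by
      intro w _
      have he : ((t:ℝ) - (t+1+w))*(k-1) = -(((w+1:ℕ):ℝ)*(k-1)) := by push_cast; ring
      rw [he, floor_neg_irr]
      exact hk1'.natCast_mul (by omega)
    rw [Finset.sum_congr rfl this, Finset.sum_sub_distrib, Finset.sum_const, Finset.card_range,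
      Finset.sum_neg_distrib]
    ring
  rw [hfirst, hsecond]
  -- reciprocity with α = h - 1
  have hrq : ⌊(t:ℝ)*(h-1)⌋ = (R:ℤ) := by
    have : (t:ℝ)*(h-1) = (t:ℝ)*h - (t:ℕ) := by push_cast; ring
    rw [this, Int.floor_sub_natCast, ← hA]
    omega
  have hrec := recip (h-1) hh1' hh10 t
  rw [hrq] at hrec
  simp only [Int.toNat_natCast] at hrec
  have hdiv : ∀ j : ℕ, (j:ℝ)/(h-1) = (j:ℝ)*(k-1) := by
    intro j
    rw [div_eq_iff (by linarith : h - 1 ≠ 0)]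
    nlinarith [hunit]
  simp only [hdiv] at hrec
  -- relate range (R+1) sum to range R shifted sum
  have hshift : ∑ j ∈ Finset.range (R+1), ⌊(j:ℝ)*(k-1)⌋
      = ∑ w ∈ Finset.range R, ⌊((w+1:ℕ):ℝ)*(k-1)⌋ := by
    rw [Finset.sum_range_succ']
    simp
  rw [hshift] at hrec
  -- floor decompositions
  have hkdec : ∀ i : ℕ, ⌊(i:ℝ)*(k-1)⌋ = ⌊(i:ℝ)*k⌋ - i := by
    intro i
    have : (i:ℝ)*(k-1) = (i:ℝ)*k - (i:ℕ) := by push_cast; ring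
    rw [this, Int.floor_sub_natCast]
  have hhdec : ∀ i : ℕ, ⌊(i:ℝ)*(h-1)⌋ = ⌊(i:ℝ)*h⌋ - i := by
    intro i
    have : (i:ℝ)*(h-1) = (i:ℝ)*h - (i:ℕ) := by push_cast; ring
    rw [this, Int.floor_sub_natCast]
  simp only [hkdec, hhdec, Finset.sum_sub_distrib] at hrec ⊢
  -- Beatty sum
  have hbeatty : (∑ i ∈ Finset.range (t+1), ⌊(i:ℝ)*h⌋) + (∑ i ∈ Finset.range (t+1), ⌊(i:ℝ)*k⌋)
      = β * (∑ i ∈ Finset.range (t+1), (i:ℤ)) - t := by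
    rw [← Finset.sum_add_distrib]
    rw [Finset.sum_range_succ', Finset.sum_range_succ' (fun i => (i:ℤ))]
    simp only [Nat.cast_zero, zero_mul, Int.floor_zero, add_zero]
    rw [Finset.mul_sum, Finset.sum_congr rfl
      (fun i _ => floor_add_floor h k hh hk β hβ (i+1) (by omega))]
    rw [Finset.sum_sub_distrib, Finset.sum_const, Finset.card_range]
    simp [mul_comm]
  -- Gauss sum
  have hgauss : 2 * (∑ i ∈ Finset.range (t+1), (i:ℤ)) = t * (t+1) := by
    have h2 : ((∑ i ∈ Finset.range (t+1), i) * 2 : ℕ) = (t+1) * t := by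
      simpa using Finset.sum_range_id_mul_two (t+1)
    have h3 : ((((∑ i ∈ Finset.range (t+1), i) * 2 : ℕ)) : ℤ) = ((t+1) * t : ℕ) := by
      exact_mod_cast h2
    push_cast at h3
    linarith [h3]
  -- final algebra
  have hARz : (A:ℤ) = t + R := by exact_mod_cast hAR
  push_cast at hrec hbeatty hgauss ⊢
  linear_combination (2:ℤ) * hbeatty - 2 * hrec + ((β:ℤ) - 2) * hgauss
    + (2 * ((t:ℤ) + 1)) * hARz

theorem stmt_9 (h k : ℝ) (hh : Irrational h) (hk : Irrational k)
    (hhpos : 0 < h) (hkpos : 0 < k) (hhk : 1 / h + 1 / k = 1)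
    (β : ℤ) (hβ : h + k = (β : ℝ))
    (T : Set (ℝ × ℝ))
    (hT : T = convexHull ℝ {((0 : ℝ), (0 : ℝ)), (h, 0), (0, k)})
    (t : ℕ) (ht : 0 < t) :
    ((((t : ℝ) • T) ∩ latticeZ2).ncard : ℝ) =
      ((β : ℝ) / 2) * t ^ 2 + ((β : ℝ) / 2) * t + 1 := by
  have hh1 : 1 < h := by
    by_contra hc
    push_neg at hc
    have h1 : 1 ≤ 1/h := by rw [le_div_iff₀ hhpos]; linarith
    have h2 : 0 < 1/k := by positivity
    linarith
  have hk1 : 1 < k := by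
    by_contra hc
    push_neg at hc
    have h1 : 1 ≤ 1/k := by rw [le_div_iff₀ hkpos]; linarith
    have h2 : 0 < 1/h := by positivity
    linarith
  have hprod : h * k = (β : ℝ) := by
    have := hhk
    field_simp at this
    linarith [hβ]
  have hunit : (h - 1) * (k - 1) = 1 := by nlinarith [hprod, hβ]
  have htpos : (0:ℝ) < (t:ℝ) := by positivity
  have ht0 : ((t:ℝ)) ≠ 0 := ne_of_gt htpos
  -- the integer data
  have hfl0 : (0:ℤ) ≤ ⌊(t:ℝ)*h⌋ := Int.floor_nonneg.2 (by positivity)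
  have hflt : (t:ℤ) ≤ ⌊(t:ℝ)*h⌋ := by
    rw [Int.le_floor]
    push_cast
    nlinarith [ht, hh1]
  set A : ℕ := (⌊(t:ℝ)*h⌋).toNat with hAdef
  have hA : (A : ℤ) = ⌊(t:ℝ)*h⌋ := Int.toNat_of_nonneg hfl0
  have htA : t ≤ A := by omega
  set R : ℕ := A - t with hRdef
  have hAR : A = t + R := by omega
  -- the function N
  set N : ℕ → ℤ := fun m => ⌊(t:ℝ)*k - m*(k-1)⌋ with hN
  have hNnonneg : ∀ m ∈ Finset.range (A+1), 0 ≤ N m := by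
    intro m hm
    rw [Finset.mem_range] at hm
    have hmA : (m:ℤ) ≤ A := by exact_mod_cast Nat.lt_succ_iff.1 hm
    have hmr : (m:ℝ) ≤ (t:ℝ)*h := by
      have h1 : ((m:ℤ):ℝ) ≤ ((⌊(t:ℝ)*h⌋:ℤ):ℝ) := by
        exact_mod_cast le_trans hmA (le_of_eq hA)
      calc (m:ℝ) = ((m:ℤ):ℝ) := by norm_cast
        _ ≤ _ := h1
        _ ≤ (t:ℝ)*h := Int.floor_le _
    rw [hN]
    apply Int.floor_nonneg.2
    nlinarith [hk1, hmr]
  -- the finset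
  set f : ℤ × ℤ → ℝ × ℝ := fun p => ((p.1 : ℝ), (p.2 : ℝ)) with hf
  have hfinj : Function.Injective f := by
    intro p q hpq
    rw [hf] at hpq
    simp only [Prod.mk.injEq] at hpq
    exact Prod.ext (by exact_mod_cast hpq.1) (by exact_mod_cast hpq.2)
  set G : Finset (ℤ × ℤ) := (Finset.range (A+1)).biUnion
    (fun m => (Finset.range ((N m).toNat + 1)).image (fun n : ℕ => ((m:ℤ), (n:ℤ)))) with hG
  -- membership characterization of G
  have hGmem : ∀ m n : ℤ, ((m, n) ∈ G ↔
      (0 ≤ m ∧ 0 ≤ n ∧ k * (m:ℝ) + h * (n:ℝ) ≤ (t:ℝ) * (h*k))) := by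
    intro m n
    rw [hG]
    simp only [Finset.mem_biUnion, Finset.mem_image, Finset.mem_range]
    constructor
    · rintro ⟨m', hm', n', hn', he⟩
      simp only [Prod.mk.injEq] at he
      obtain ⟨rfl, rfl⟩ := he
      refine ⟨Int.natCast_nonneg _, Int.natCast_nonneg _, ?_⟩
      have h1 : (n' : ℤ) ≤ N m' := by
        have h2 := hNnonneg m' (Finset.mem_range.2 hm')
        omega
      have h2 : (n' : ℝ) ≤ (t:ℝ)*k - m'*(k-1) := by
        calc (n':ℝ) = ((n':ℤ):ℝ) := by norm_cast
          _ ≤ ((N m' : ℤ):ℝ) := by exact_mod_cast h1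
          _ ≤ _ := Int.floor_le _
      push_cast
      nlinarith [hunit, hh1, h2]
    · rintro ⟨hm0, hn0, hle⟩
      refine ⟨m.toNat, ?_, n.toNat, ?_, ?_⟩
      · have hm1 : (m:ℝ) ≤ (t:ℝ)*h := by
          nlinarith [hk1, hkpos, hle, (by exact_mod_cast hn0 : (0:ℝ) ≤ (n:ℝ)), hhpos]
        have h3 : (m:ℤ) ≤ ⌊(t:ℝ)*h⌋ := Int.le_floor.2 (by exact_mod_cast hm1)
        omega
      · have hmt : ((m.toNat : ℕ):ℝ) = (m:ℝ) := by
          exact_mod_cast congrArg (Int.cast : ℤ → ℝ) (Int.toNat_of_nonneg hm0)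
        have hkh : h * (k - 1) = k := by nlinarith [hunit]
        have hn1 : (n:ℝ) ≤ (t:ℝ)*k - (m.toNat:ℝ)*(k-1) := by
          rw [hmt]
          nlinarith [hle, hhpos, (by exact_mod_cast hm0 : (0:ℝ) ≤ (m:ℝ)), hkh]
        have h4 : (n:ℤ) ≤ N m.toNat := Int.le_floor.2 (by exact_mod_cast hn1)
        omega
      · simp [Int.toNat_of_nonneg hm0, Int.toNat_of_nonneg hn0]
  -- scaled triangle characterization
  have hsm : ∀ x y : ℝ, ((x, y) ∈ (t:ℝ) • T ↔
      (0 ≤ x ∧ 0 ≤ y ∧ k * x + h * y ≤ (t:ℝ) * (h*k))) := by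
    intro x y
    rw [Set.mem_smul_set_iff_inv_smul_mem₀ ht0, hT, tri_char h k hh1 hk1]
    simp only [Prod.smul_mk, smul_eq_mul, Set.mem_setOf_eq]
    constructor
    · rintro ⟨h1, h2, h3⟩
      have hx : 0 ≤ x := by
        have h5 : 0 ≤ (t:ℝ) * ((t:ℝ)⁻¹ * x) := mul_nonneg htpos.le h1
        rwa [← mul_assoc, mul_inv_cancel₀ ht0, one_mul] at h5
      have hy : 0 ≤ y := by
        have h5 : 0 ≤ (t:ℝ) * ((t:ℝ)⁻¹ * y) := mul_nonneg htpos.le h2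
        rwa [← mul_assoc, mul_inv_cancel₀ ht0, one_mul] at h5
      refine ⟨hx, hy, ?_⟩
      have h4 : (t:ℝ) * (k * ((t:ℝ)⁻¹ * x) + h * ((t:ℝ)⁻¹ * y)) ≤ (t:ℝ) * (h*k) :=
        mul_le_mul_of_nonneg_left h3 htpos.le
      calc k * x + h * y = (t:ℝ) * (k * ((t:ℝ)⁻¹ * x) + h * ((t:ℝ)⁻¹ * y)) := by
            field_simp
        _ ≤ _ := h4
    · rintro ⟨h1, h2, h3⟩
      refine ⟨by positivity, by positivity, ?_⟩
      have h4 : (t:ℝ)⁻¹ * (k * x + h * y) ≤ (t:ℝ)⁻¹ * ((t:ℝ) * (h*k)) :=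
        mul_le_mul_of_nonneg_left h3 (by positivity)
      calc k * ((t:ℝ)⁻¹ * x) + h * ((t:ℝ)⁻¹ * y) = (t:ℝ)⁻¹ * (k * x + h * y) := by ring
        _ ≤ (t:ℝ)⁻¹ * ((t:ℝ) * (h*k)) := h4
        _ = h * k := by field_simp
  -- set equality
  have hTset : ((t : ℝ) • T) ∩ latticeZ2 = f '' (G : Set (ℤ × ℤ)) := by
    ext p
    constructor
    · rintro ⟨hxT, m, n, rfl⟩
      refine ⟨(m, n), ?_, rfl⟩
      rw [Finset.mem_coe, hGmem m n]
      rw [hsm (m:ℝ) (n:ℝ)] at hxT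
      obtain ⟨h1, h2, h3⟩ := hxT
      exact ⟨by exact_mod_cast h1, by exact_mod_cast h2, h3⟩
    · rintro ⟨⟨m, n⟩, hpG, rfl⟩
      rw [Finset.mem_coe, hGmem m n] at hpG
      obtain ⟨hm0, hn0, hle⟩ := hpG
      constructor
      · rw [hf]
        rw [hsm (m:ℝ) (n:ℝ)]
        exact ⟨by exact_mod_cast hm0, by exact_mod_cast hn0, hle⟩
      · exact ⟨m, n, rfl⟩
  -- cardinality
  have hcard : (((t : ℝ) • T) ∩ latticeZ2).ncard = G.card := by
    rw [hTset, ← Finset.coe_image, Set.ncard_coe_finset,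
      Finset.card_image_of_injective _ hfinj]
  have hGcard : (G.card : ℤ) = ∑ m ∈ Finset.range (A+1), (N m + 1) := by
    rw [hG, Finset.card_biUnion]
    · push_cast
      apply Finset.sum_congr rfl
      intro m hm
      rw [Finset.card_image_of_injective, Finset.card_range]
      · have := hNnonneg m hm
        push_cast
        omega
      · intro a b hab
        simpa using hab
    · intro x hx y hy hxy
      simp only [Finset.disjoint_left, Finset.mem_image, Finset.mem_range]
      rintro ⟨mm, nn⟩ ⟨n1, hn1, he1⟩ ⟨n2, hn2, he2⟩
      simp only [Prod.mk.injEq] at he1 he2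
      apply hxy
      exact_mod_cast he1.1.trans he2.1.symm
  -- final computation
  have hmain := count_main h k hh hk hh1 hk1 hunit β hβ t ht A R hA hAR
  have h2G : 2 * ((G.card : ℤ)) = β * t * (t+1) + 2 := by rw [hGcard]; exact hmain
  rw [hcard]
  have hcast : 2 * ((G.card : ℝ)) = (β:ℝ) * t * (t+1) + 2 := by exact_mod_cast h2G
  push_cast
  nlinarith [hcast]
end
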